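/- Let A = {P^A_i} and B = {P^B_j} be projective observables on ℂ^d. Then Q_F(A→B) ≤ 1 − 1/d; equivalently, for every density matrix ρ, (Σ_j √(q^{A→B}_ρ(j) · p^B_ρ(j)))² ≥ 1/d. -/

import Mathlib

open scoped BigOperators ComplexOrder
open Matrix

noncomputable section

/-- A projective observable: a finite family of mutually orthogonal
self-adjoint idempotents summing to the identity. -/
def IsProjObs {d r : ℕ} (P : Fin r → Matrix (Fin d) (Fin d) ℂ) : Prop :=
  (∀ i, (P i).IsHermitian) ∧ (∀ i, P i * P i = P i) ∧
    (∀ i k, i ≠ k → P i * P k = 0) ∧ (∑ i, P i = 1)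

/-- A density matrix: positive semidefinite with unit trace. -/
def IsDensity {d : ℕ} (ρ : Matrix (Fin d) (Fin d) ℂ) : Prop :=
  ρ.PosSemidef ∧ ρ.trace = 1

/-- The measurement channel `E^A(ρ) = Σ_i P_i ρ P_i` of a projective observable. -/
def measChannel {d r : ℕ} (P : Fin r → Matrix (Fin d) (Fin d) ℂ)
    (ρ : Matrix (Fin d) (Fin d) ℂ) : Matrix (Fin d) (Fin d) ℂ :=
  ∑ i, P i * ρ * P i

/-- `p^B_ρ(j) = tr(P^B_j ρ)`. -/
def probB {d rB : ℕ} (Q : Fin rB → Matrix (Fin d) (Fin d) ℂ)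
    (ρ : Matrix (Fin d) (Fin d) ℂ) (j : Fin rB) : ℝ :=
  ((Q j * ρ).trace).re

/-- `q^{A→B}_ρ(j) = tr(P^B_j Σ_i P^A_i ρ P^A_i)`. -/
def probAB {d rA rB : ℕ} (P : Fin rA → Matrix (Fin d) (Fin d) ℂ)
    (Q : Fin rB → Matrix (Fin d) (Fin d) ℂ)
    (ρ : Matrix (Fin d) (Fin d) ℂ) (j : Fin rB) : ℝ :=
  ((Q j * measChannel P ρ).trace).re

open Classical in
/-- The positive semidefinite square root of a PSD matrix (junk value `0` otherwise). -/
noncomputable def msqrt {d : ℕ} (A : Matrix (Fin d) (Fin d) ℂ) :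
    Matrix (Fin d) (Fin d) ℂ :=
  if h : A.PosSemidef then
    (h.1.eigenvectorUnitary : Matrix (Fin d) (Fin d) ℂ) *
      Matrix.diagonal ((↑) ∘ Real.sqrt ∘ h.1.eigenvalues) *
      (star h.1.eigenvectorUnitary : Matrix (Fin d) (Fin d) ℂ)
  else 0

/-- `|X| = √(Xᴴ X)`, the positive semidefinite absolute value of a matrix. -/
noncomputable def matAbs {d : ℕ} (X : Matrix (Fin d) (Fin d) ℂ) :
    Matrix (Fin d) (Fin d) ℂ :=
  msqrt (Xᴴ * X)

/-- The quantum fidelity `F(ρ,σ) = tr √(√ρ σ √ρ)`. -/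
noncomputable def qFid {d : ℕ} (ρ σ : Matrix (Fin d) (Fin d) ℂ) : ℝ :=
  ((msqrt (msqrt ρ * σ * msqrt ρ)).trace).re

/-- Variational distance `D_1(p,q) = (1/2) Σ_j |p_j − q_j|`. -/
def distL1 {rB : ℕ} (p q : Fin rB → ℝ) : ℝ := (1 / 2) * ∑ j, |p j - q j|

/-- Chebyshev distance `D_∞(p,q) = max_j |p_j − q_j|`. -/
noncomputable def distLinf {rB : ℕ} (p q : Fin rB → ℝ) : ℝ := ⨆ j, |p j - q j|

/-- Classical fidelity `F(p,q) = Σ_j √(p_j q_j)`. -/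
noncomputable def classFid {rB : ℕ} (p q : Fin rB → ℝ) : ℝ :=
  ∑ j, Real.sqrt (p j * q j)

/-- `Q_1(A→B)`. -/
noncomputable def Q1 {d rA rB : ℕ} (P : Fin rA → Matrix (Fin d) (Fin d) ℂ)
    (Q : Fin rB → Matrix (Fin d) (Fin d) ℂ) : ℝ :=
  sSup {x : ℝ | ∃ ρ, IsDensity ρ ∧ x = distL1 (probAB P Q ρ) (probB Q ρ)}

/-- `Q_∞(A→B)`. -/
noncomputable def Qinf {d rA rB : ℕ} (P : Fin rA → Matrix (Fin d) (Fin d) ℂ)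
    (Q : Fin rB → Matrix (Fin d) (Fin d) ℂ) : ℝ :=
  sSup {x : ℝ | ∃ ρ, IsDensity ρ ∧ x = distLinf (probAB P Q ρ) (probB Q ρ)}

/-- `Q_F(A→B)`. -/
noncomputable def QF {d rA rB : ℕ} (P : Fin rA → Matrix (Fin d) (Fin d) ℂ)
    (Q : Fin rB → Matrix (Fin d) (Fin d) ℂ) : ℝ :=
  sSup {x : ℝ | ∃ ρ, IsDensity ρ ∧
    x = 1 - (classFid (probAB P Q ρ) (probB Q ρ)) ^ 2}

/-- The rank-one projection `|v⟩⟨v|` onto a (unit) vector `v`. -/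
def proj {d : ℕ} (v : Fin d → ℂ) : Matrix (Fin d) (Fin d) ℂ :=
  Matrix.vecMulVec v (star v)

section Aux

variable {d r : ℕ}

lemma sumMulVec (s : Finset (Fin r)) (A : Fin r → Matrix (Fin d) (Fin d) ℂ) (x : Fin d → ℂ) :
    (∑ i ∈ s, A i) *ᵥ x = ∑ i ∈ s, (A i *ᵥ x) := by
  ext j
  simp [Matrix.mulVec, dotProduct, Matrix.sum_apply, Finset.sum_mul]
  rw [Finset.sum_comm]

lemma mulVecSum (s : Finset (Fin r)) (A : Matrix (Fin d) (Fin d) ℂ) (y : Fin r → Fin d → ℂ) :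
    A *ᵥ (∑ i ∈ s, y i) = ∑ i ∈ s, (A *ᵥ y i) := by
  ext j
  simp [Matrix.mulVec, dotProduct, Finset.sum_apply, Finset.mul_sum]
  rw [Finset.sum_comm]

lemma dot_herm (A B : Matrix (Fin d) (Fin d) ℂ) (hA : A.IsHermitian) (x z : Fin d → ℂ) :
    star (A *ᵥ x) ⬝ᵥ (B *ᵥ z) = star x ⬝ᵥ ((A * B) *ᵥ z) := by
  rw [star_mulVec, hA.eq, ← dotProduct_mulVec, mulVec_mulVec]

lemma quad_idem (Q : Matrix (Fin d) (Fin d) ℂ) (hQ : Q.IsHermitian) (hQ2 : Q * Q = Q)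
    (x : Fin d → ℂ) : star x ⬝ᵥ (Q *ᵥ x) = star (Q *ᵥ x) ⬝ᵥ (Q *ᵥ x) := by
  rw [dot_herm Q Q hQ, hQ2]

noncomputable def toE {d : ℕ} (y : Fin d → ℂ) : EuclideanSpace ℂ (Fin d) :=
  (WithLp.equiv 2 (Fin d → ℂ)).symm y

lemma inner_toE (u v : Fin d → ℂ) : (inner ℂ (toE u) (toE v) : ℂ) = star u ⬝ᵥ v := by
  simp [toE, PiLp.inner_apply, dotProduct, RCLike.inner_apply, mul_comm]

lemma dot_self_eq (y : Fin d → ℂ) : star y ⬝ᵥ y = ((‖toE y‖ ^ 2 : ℝ) : ℂ) := by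
  rw [← inner_toE, inner_self_eq_norm_sq_to_K]
  norm_cast

lemma card_bound (P : Fin r → Matrix (Fin d) (Fin d) ℂ)
    (hPh : ∀ i, (P i).IsHermitian) (hPo : ∀ i k, i ≠ k → P i * P k = 0) (x : Fin d → ℂ) :
    (Finset.univ.filter (fun i => P i *ᵥ x ≠ 0)).card ≤ d := by
  set S := Finset.univ.filter (fun i => P i *ᵥ x ≠ 0) with hS
  have hli : LinearIndependent ℂ (fun i : ↥S => toE (P i.1 *ᵥ x)) := by
    apply linearIndependent_of_ne_zero_of_inner_eq_zero
    · intro i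
      have := Finset.mem_filter.mp i.2
      simpa [toE] using this.2
    · intro i k hik
      rw [inner_toE, dot_herm _ _ (hPh i.1), hPo i.1 k.1 (fun h => hik (Subtype.ext h)),
        zero_mulVec, dotProduct_zero]
  have := hli.fintype_card_le_finrank
  rwa [finrank_euclideanSpace_fin, Fintype.card_coe] at this

lemma norm_sq_sum_le {r : ℕ} (y : Fin r → EuclideanSpace ℂ (Fin d)) (S : Finset (Fin r))
    (h0 : ∀ i ∉ S, y i = 0) (hcard : S.card ≤ d) :
    ‖∑ i, y i‖ ^ 2 ≤ (d : ℝ) * ∑ i, ‖y i‖ ^ 2 := by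
  have hsum : ∑ i, y i = ∑ i ∈ S, y i :=
    (Finset.sum_subset S.subset_univ (fun i _ hi => h0 i hi)).symm
  calc ‖∑ i, y i‖ ^ 2 ≤ (∑ i ∈ S, ‖y i‖) ^ 2 := by
        rw [hsum]; exact pow_le_pow_left₀ (norm_nonneg _) (norm_sum_le _ _) 2
    _ ≤ (S.card : ℝ) * ∑ i ∈ S, ‖y i‖ ^ 2 := by
        simpa using sq_sum_le_card_mul_sum_sq (s := S) (f := fun i => ‖y i‖)
    _ ≤ (d : ℝ) * ∑ i, ‖y i‖ ^ 2 := by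
        apply mul_le_mul (by exact_mod_cast hcard)
          (Finset.sum_le_sum_of_subset_of_nonneg S.subset_univ (fun i _ _ => by positivity))
          (Finset.sum_nonneg fun i _ => by positivity) (by positivity)

lemma dotSum {r : ℕ} (s : Finset (Fin r)) (v : Fin d → ℂ) (w : Fin r → Fin d → ℂ) :
    v ⬝ᵥ (∑ i ∈ s, w i) = ∑ i ∈ s, v ⬝ᵥ w i := by
  simp [dotProduct, Finset.sum_apply, Finset.mul_sum]
  rw [Finset.sum_comm]

lemma trace_psd_nonneg {N : Matrix (Fin d) (Fin d) ℂ} (hN : N.PosSemidef) : 0 ≤ N.trace := by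
  rw [Matrix.trace]
  apply Finset.sum_nonneg
  intro i _
  exact hN.diag_nonneg

open scoped MatrixOrder in
lemma trace_mul_psd_re_nonneg {M ρ : Matrix (Fin d) (Fin d) ℂ}
    (hM : M.PosSemidef) (hρ : ρ.PosSemidef) : 0 ≤ ((M * ρ).trace).re := by
  have h1 : M * ρ = M * (CFC.sqrt ρ * CFC.sqrt ρ) := by rw [CFC.sqrt_mul_sqrt_self ρ hρ.nonneg]
  have h2 : (M * ρ).trace = (CFC.sqrt ρ * M * CFC.sqrt ρ).trace := by
    rw [h1, ← mul_assoc, Matrix.trace_mul_comm, ← mul_assoc]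
  have h3 : (CFC.sqrt ρ * M * CFC.sqrt ρ).PosSemidef := by
    have := hM.conjTranspose_mul_mul_same (CFC.sqrt ρ)
    rwa [(CFC.sqrt_nonneg ρ).posSemidef.1.eq] at this
  have h4 := trace_psd_nonneg h3
  rw [h2]
  exact (Complex.le_def.mp h4).1

lemma key_psd {rA : ℕ} (P : Fin rA → Matrix (Fin d) (Fin d) ℂ) (hP : IsProjObs P)
    (Qj : Matrix (Fin d) (Fin d) ℂ) (hQh : Qj.IsHermitian) (hQ2 : Qj * Qj = Qj) :
    ((d : ℂ) • (∑ i, P i * Qj * P i) - Qj).PosSemidef := by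
  obtain ⟨hPh, hPi, hPo, hPs⟩ := hP
  have hterm : ∀ i, (P i * Qj * P i).IsHermitian := fun i => by
    unfold Matrix.IsHermitian
    rw [conjTranspose_mul, conjTranspose_mul, hQh.eq, (hPh i).eq, mul_assoc]
  rw [Matrix.posSemidef_iff_dotProduct_mulVec]
  constructor
  · show _ᴴ = _
    rw [conjTranspose_sub, conjTranspose_smul, conjTranspose_sum]
    simp only [fun i => (hterm i).eq]
    rw [hQh.eq]
    congr 1
    simp
  · intro x
    set y : Fin rA → (Fin d → ℂ) := fun i => Qj *ᵥ (P i *ᵥ x) with hy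
    -- each term of the pinched quadratic form
    have hterm2 : ∀ i, star x ⬝ᵥ ((P i * Qj * P i) *ᵥ x)
        = ((‖toE (y i)‖ ^ 2 : ℝ) : ℂ) := by
      intro i
      rw [mul_assoc, ← dot_herm (P i) (Qj * P i) (hPh i) x x, ← mulVec_mulVec,
        quad_idem Qj hQh hQ2, ← dot_self_eq]
    -- the unpinched quadratic form
    have hsplit : Qj *ᵥ x = ∑ i, y i := by
      conv_lhs => rw [← one_mulVec x, ← hPs, sumMulVec, mulVecSum]
    have hq : star x ⬝ᵥ (Qj *ᵥ x) = ((‖∑ i, toE (y i)‖ ^ 2 : ℝ) : ℂ) := by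
      rw [quad_idem Qj hQh hQ2, hsplit, dot_self_eq]
      norm_cast
      simp [toE]
    -- the real inequality
    set S := Finset.univ.filter (fun i => P i *ᵥ x ≠ 0) with hS
    have hreal : ‖∑ i, toE (y i)‖ ^ 2 ≤ (d : ℝ) * ∑ i, ‖toE (y i)‖ ^ 2 := by
      apply norm_sq_sum_le _ S
      · intro i hi
        have h0' : P i *ᵥ x = 0 := by
          by_contra h
          exact hi (Finset.mem_filter.mpr ⟨Finset.mem_univ i, h⟩)
        have hyi : y i = 0 := by rw [hy]; dsimp only; rw [h0', mulVec_zero]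
        simp [toE, hyi]
      · exact card_bound P hPh hPo x
    -- combine
    have expand : star x ⬝ᵥ (((d : ℂ) • (∑ i, P i * Qj * P i) - Qj) *ᵥ x)
        = (((d : ℝ) * ∑ i, ‖toE (y i)‖ ^ 2 - ‖∑ i, toE (y i)‖ ^ 2 : ℝ) : ℂ) := by
      rw [sub_mulVec, dotProduct_sub, smul_mulVec, dotProduct_smul,
        sumMulVec, dotSum, hq]
      simp only [hterm2, smul_eq_mul]
      push_cast
      ring
    rw [expand]
    rw [Complex.zero_le_real]
    linarith


private theorem main_bound {rA rB : ℕ} (hd : 0 < d)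
    (P : Fin rA → Matrix (Fin d) (Fin d) ℂ) (Q : Fin rB → Matrix (Fin d) (Fin d) ℂ)
    (hP : IsProjObs P) (hQ : IsProjObs Q)
    (ρ : Matrix (Fin d) (Fin d) ℂ) (hρ : IsDensity ρ) :
    (∑ j, Real.sqrt (((Q j * measChannel P ρ).trace).re * ((Q j * ρ).trace).re)) ^ 2
      ≥ 1 / (d : ℝ) := by
  obtain ⟨hQh, hQi, hQo, hQs⟩ := hQ
  set p : Fin rB → ℝ := fun j => ((Q j * ρ).trace).re with hp
  set q : Fin rB → ℝ := fun j => ((Q j * measChannel P ρ).trace).re with hq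
  have hQpsd : ∀ j, (Q j).PosSemidef := by
    intro j
    have := Matrix.posSemidef_conjTranspose_mul_self (Q j)
    rwa [(hQh j).eq, hQi j] at this
  have hpnn : ∀ j, 0 ≤ p j := fun j => trace_mul_psd_re_nonneg (hQpsd j) hρ.1
  have hpsum : ∑ j, p j = 1 := by
    rw [hp, ← Complex.re_sum, ← Matrix.trace_sum, ← Finset.sum_mul, hQs, one_mul, hρ.2]
    simp
  have hkey : ∀ j, p j ≤ (d : ℝ) * q j := by
    intro j
    have hqe : (Q j * measChannel P ρ).trace = ((∑ i, P i * Q j * P i) * ρ).trace := by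
      rw [measChannel, Matrix.mul_sum, Matrix.trace_sum, Finset.sum_mul, Matrix.trace_sum]
      apply Finset.sum_congr rfl
      intro i _
      rw [show Q j * (P i * ρ * P i) = (Q j * P i) * ρ * P i by simp [mul_assoc],
        Matrix.trace_mul_cycle, ← mul_assoc]
    have hM := trace_mul_psd_re_nonneg
      (key_psd P hP (Q j) (hQh j) (hQi j)) hρ.1
    have hMexp : ((((d : ℂ) • (∑ i, P i * Q j * P i) - Q j) * ρ).trace).re
        = (d : ℝ) * q j - p j := by
      rw [Matrix.sub_mul, Matrix.trace_sub, Matrix.smul_mul, Matrix.trace_smul, hq, hp]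
      dsimp only
      rw [hqe]
      simp [Complex.mul_re]
    rw [hMexp] at hM
    linarith
  have hqnn : ∀ j, 0 ≤ q j := by
    intro j
    have := hkey j
    have hd' : (0 : ℝ) < d := by exact_mod_cast hd
    nlinarith [hpnn j]
  -- fidelity chain
  set F : ℝ := ∑ j, Real.sqrt (q j * p j) with hF
  have hterm : ∀ j, p j ≤ Real.sqrt d * Real.sqrt (q j * p j) := by
    intro j
    have h1 : p j = Real.sqrt (p j * p j) := (Real.sqrt_mul_self (hpnn j)).symm
    have h2 : Real.sqrt (p j * p j) ≤ Real.sqrt ((d : ℝ) * q j * p j) := by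
      apply Real.sqrt_le_sqrt
      exact mul_le_mul_of_nonneg_right (hkey j) (hpnn j)
    have h3 : Real.sqrt ((d : ℝ) * q j * p j) = Real.sqrt d * Real.sqrt (q j * p j) := by
      rw [mul_assoc, Real.sqrt_mul (by positivity)]
    linarith [h1 ▸ h2, h3 ▸ h2]
  have hchain : 1 ≤ Real.sqrt d * F := by
    rw [hF, Finset.mul_sum, ← hpsum]
    exact Finset.sum_le_sum fun j _ => hterm j
  have hFnn : 0 ≤ F := Finset.sum_nonneg fun j _ => Real.sqrt_nonneg _
  have hds : (Real.sqrt d) ^ 2 = d := Real.sq_sqrt (by positivity)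
  have hd' : (0 : ℝ) < d := by exact_mod_cast hd
  rw [ge_iff_le, div_le_iff₀ hd']
  nlinarith [hchain, hds, hFnn]

end Aux

theorem stmt_9 {d rA rB : ℕ} (hd : 0 < d)
    (P : Fin rA → Matrix (Fin d) (Fin d) ℂ) (Q : Fin rB → Matrix (Fin d) (Fin d) ℂ)
    (hP : IsProjObs P) (hQ : IsProjObs Q) :
    (∀ ρ : Matrix (Fin d) (Fin d) ℂ, IsDensity ρ →
        (classFid (probAB P Q ρ) (probB Q ρ)) ^ 2 ≥ 1 / (d : ℝ)) ∧
      QF P Q ≤ 1 - 1 / (d : ℝ) := by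
  have hmain : ∀ ρ : Matrix (Fin d) (Fin d) ℂ, IsDensity ρ →
      (classFid (probAB P Q ρ) (probB Q ρ)) ^ 2 ≥ 1 / (d : ℝ) := by
    intro ρ hρ
    have := main_bound hd P Q hP hQ ρ hρ
    simpa [classFid, probAB, probB] using this
  refine ⟨hmain, ?_⟩
  have hd' : (0 : ℝ) < d := by exact_mod_cast hd
  have h1d : 1 / (d : ℝ) ≤ 1 := by
    rw [div_le_one hd']
    exact_mod_cast hd
  apply Real.sSup_le
  · rintro x ⟨ρ, hρ, rfl⟩
    have := hmain ρ hρ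
    linarith
  · linarith

end
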